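/- Let M be a finite subset of a group G, let V be a vector space over a field k, and let S = L(V^M, V). Then for all s ∈ S^G, all finitely supported ω : G → V*, and all c ∈ V^G, one has ⟨σ_{s*}(ω) | c⟩ = ⟨ω | σ_s(c)⟩, where ⟨η | d⟩ = Σ_{g∈G} η(g)(d(g)). -/
import Mathlib


open scoped BigOperators Pointwise

/-- The linear NUCA `σ_s : V^G → V^G` with memory `M ⊆ G` associated with the
configuration of local defining maps `s`, given in coefficient form:
`σ_s(x)(g) = ∑_{m ∈ M} s(g,m)(x(g·m))`. -/
def nucaMap {k V G : Type*} [Field k] [AddCommGroup V] [Module k V] [Group G]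
    (M : Finset G) (s : G → G → (V →ₗ[k] V)) (x : G → V) : G → V :=
  fun g => ∑ m ∈ M, s g m (x (g * m))

/-- The dual configuration `s*` of local defining maps, in coefficient form:
`s*(g,m) = (s(g·m, m⁻¹))ᵀ`, the transpose (dual map) of `s(g·m, m⁻¹)`. -/
def dualCoeff {k V G : Type*} [Field k] [AddCommGroup V] [Module k V] [Group G]
    (s : G → G → (V →ₗ[k] V)) :
    G → G → (Module.Dual k V →ₗ[k] Module.Dual k V) :=
  fun g m => (s (g * m) m⁻¹).dualMap

/-- The natural pairing: `⟨σ_{s*}(ω) | c⟩ = ⟨ω | σ_s(c)⟩` for every finitely supported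
`ω : G → V*` and every `c ∈ V^G`, where `⟨η | d⟩ = ∑_{g ∈ G} η(g)(d(g))`. -/
theorem stmt7 {k V G : Type*} [Field k] [AddCommGroup V] [Module k V] [Group G]
    [DecidableEq G]
    (M : Finset G) (s : G → G → (V →ₗ[k] V)) (hs : ∀ g, ∀ m ∉ M, s g m = 0)
    (ω : G → Module.Dual k V) (hω : (Function.support ω).Finite) (c : G → V) :
    ∑ᶠ g : G, (nucaMap M⁻¹ (dualCoeff s) ω g) (c g) =
      ∑ᶠ g : G, ω g (nucaMap M s c g) := by
  classical
  set T : Finset G := hω.toFinset ∪ hω.toFinset * M with hT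
  have hmem : ∀ g, ω g ≠ 0 → g ∈ T := fun g hg =>
    Finset.mem_union_left _ (by simpa using hg)
  have hmem2 : ∀ g n, n ∈ M → ω g ≠ 0 → g * n ∈ T := fun g n hn hg =>
    Finset.mem_union_right _ (Finset.mul_mem_mul (by simpa using hg) hn)
  have hL : ∑ᶠ g : G, (nucaMap M⁻¹ (dualCoeff s) ω g) (c g)
      = ∑ g ∈ T, ∑ m ∈ M⁻¹, ω (g * m) (s (g * m) m⁻¹ (c g)) := by
    rw [finsum_eq_finset_sum_of_support_subset _ (s := T)]
    · apply Finset.sum_congr rfl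
      intro g _
      simp [nucaMap, dualCoeff, LinearMap.sum_apply]
    · intro g hg
      simp only [Function.mem_support, nucaMap, dualCoeff] at hg
      by_contra hgT
      apply hg
      have : ∀ m ∈ M⁻¹, ω (g * m) = 0 := by
        intro m hm
        by_contra hωm
        exact hgT (by
          have := hmem2 (g * m) m⁻¹ (by simpa using hm) hωm
          simpa using this)
      rw [Finset.sum_congr rfl (fun m hm => by rw [this m hm])]
      simp
  have hR : ∑ᶠ g : G, ω g (nucaMap M s c g)
      = ∑ g ∈ T, ∑ n ∈ M, ω g (s g n (c (g * n))) := by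
    rw [finsum_eq_finset_sum_of_support_subset _ (s := T)]
    · apply Finset.sum_congr rfl
      intro g _
      simp [nucaMap]
    · intro g hg
      simp only [Function.mem_support] at hg
      by_contra hgT
      apply hg
      have : ω g = 0 := by
        by_contra h
        exact hgT (hmem g h)
      simp [this]
  rw [hL, hR, ← Finset.sum_product', ← Finset.sum_product']
  apply Finset.sum_bij_ne_zero (i := fun p _ _ => (p.1 * p.2, p.2⁻¹))
  · rintro ⟨g, m⟩ h₁ h₂
    simp only [Finset.mem_product] at h₁ ⊢
    refine ⟨?_, by simpa using h₁.2⟩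
    have hωgm : ω (g * m) ≠ 0 := by
      intro h0
      exact h₂ (by simp [h0])
    exact hmem _ hωgm
  · rintro ⟨g₁, m₁⟩ h₁₁ h₁₂ ⟨g₂, m₂⟩ h₂₁ h₂₂ heq
    simp only [Prod.mk.injEq] at heq
    have hm : m₁ = m₂ := by
      have := heq.2
      simpa using congrArg (·⁻¹) this
    subst hm
    have : g₁ = g₂ := by
      have := heq.1
      exact mul_right_cancel this
    simp [this]
  · rintro ⟨h, n⟩ hb hb0
    simp only [Finset.mem_product] at hb
    have hωh : ω h ≠ 0 := by
      intro h0
      exact hb0 (by simp [h0])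
    refine ⟨(h * n, n⁻¹), ?_, ?_, ?_⟩
    · simp only [Finset.mem_product]
      exact ⟨hmem2 h n hb.2 hωh, by simpa using hb.2⟩
    · simpa using hb0
    · simp
  · rintro ⟨g, m⟩ h₁ h₂
    simp
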